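/- Let P be a complete lattice and K : ι → Set P a family of canonically closed subsets of P with the finite intersection property: for every finite set t : Finset ι, the intersection ⋂ i ∈ t, K i is nonempty. Then the total intersection ⋂ i, K i is nonempty. (Compactness of the topology of canonically closed sets.) -/
import Mathlib


universe u v

/-- A subset of a complete lattice is canonically closed if it is closed under
canonical ultraproducts of families valued in it. -/
def CanonicallyClosed {P : Type u} [CompleteLattice P] (K : Set P) : Prop :=
  ∀ (S : Type u) (f : S → P), (∀ s, f s ∈ K) →
    ∀ μ : Ultrafilter S, (⨆ A ∈ μ, ⨅ s ∈ A, f s) ∈ K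

/-- The canonical ultraproduct only depends on the family μ-almost everywhere. -/
theorem ultraprod_le_congr {P : Type u} [CompleteLattice P] {S : Type u}
    (f g : S → P) (μ : Ultrafilter S) {B : Set S} (hB : B ∈ μ)
    (h : ∀ s ∈ B, f s = g s) :
    (⨆ A ∈ μ, ⨅ s ∈ A, f s) ≤ ⨆ A ∈ μ, ⨅ s ∈ A, g s := by
  refine iSup₂_le fun A hA => ?_
  have hAB : A ∩ B ∈ μ := μ.toFilter.inter_sets hA hB
  refine le_trans ?_ (le_iSup₂ (f := fun A _ => ⨅ s ∈ A, g s) (A ∩ B) hAB)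
  refine le_iInf₂ fun s hs => ?_
  rw [← h s hs.2]
  exact iInf₂_le s hs.1

theorem ultraprod_congr {P : Type u} [CompleteLattice P] {S : Type u}
    (f g : S → P) (μ : Ultrafilter S) {B : Set S} (hB : B ∈ μ)
    (h : ∀ s ∈ B, f s = g s) :
    (⨆ A ∈ μ, ⨅ s ∈ A, f s) = ⨆ A ∈ μ, ⨅ s ∈ A, g s :=
  le_antisymm (ultraprod_le_congr f g μ hB h)
    (ultraprod_le_congr g f μ hB fun s hs => (h s hs).symm)

/-- Compactness: a family of canonically closed subsets with the finite
intersection property has nonempty total intersection. -/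
theorem canonicallyClosed_compact {P : Type u} [CompleteLattice P]
    {ι : Type v} (K : ι → Set P) (hK : ∀ i, CanonicallyClosed (K i))
    (hfip : ∀ t : Finset ι, (⋂ i ∈ t, K i).Nonempty) :
    (⋂ i, K i).Nonempty := by
  classical
  let J : Type u := ↥(Set.range K)
  -- choose an index for each element of J
  have hidx : ∀ j : J, ∃ i : ι, K i = (j : Set P) := fun j => j.2
  choose idx hidx using hidx
  -- finite intersection property for J
  have hfipJ : ∀ t : Finset J, (⋂ j ∈ t, (j : Set P)).Nonempty := by
    intro t
    obtain ⟨x, hx⟩ := hfip (t.image idx)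
    refine ⟨x, Set.mem_iInter₂.2 fun j hj => ?_⟩
    have := Set.mem_iInter₂.1 hx (idx j) (Finset.mem_image_of_mem idx hj)
    rwa [hidx j] at this
  choose f hf using hfipJ
  have hf' : ∀ (t : Finset J) (j : J), j ∈ t → f t ∈ (j : Set P) := by
    intro t j hj
    exact Set.mem_iInter₂.1 (hf t) j hj
  -- ultrafilter extending atTop on Finset J
  haveI : Nonempty (Finset J) := ⟨∅⟩
  have hbot : (Filter.atTop : Filter (Finset J)).NeBot := Filter.atTop_neBot
  let μ : Ultrafilter (Finset J) := @Ultrafilter.of _ Filter.atTop hbot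
  have hle : (μ : Filter (Finset J)) ≤ Filter.atTop := Ultrafilter.of_le _
  set x : P := ⨆ A ∈ μ, ⨅ t ∈ A, f t with hx
  refine ⟨x, Set.mem_iInter.2 fun i => ?_⟩
  set j : J := ⟨K i, ⟨i, rfl⟩⟩ with hjdef
  have hB : {t : Finset J | j ∈ t} ∈ μ := by
    apply hle
    refine Filter.mem_atTop_sets.2 ⟨{j}, fun t ht => ?_⟩
    exact Finset.singleton_subset_iff.1 ht
  -- modified family valued in K i everywhere
  set g : Finset J → P := fun t => if j ∈ t then f t else f {j} with hg
  have hgK : ∀ t, g t ∈ K i := by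
    intro t
    by_cases h : j ∈ t
    · simpa [hg, h] using hf' t j h
    · simpa [hg, h] using hf' {j} j (Finset.mem_singleton_self j)
  have := hK i (Finset J) g hgK μ
  have heq : x = ⨆ A ∈ μ, ⨅ t ∈ A, g t := by
    refine ultraprod_congr f g μ hB fun t ht => ?_
    simp [hg, ht.out]
  rwa [heq]
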